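/- Let m1, m2 be positive integers, let A be an m2×m2 real matrix and let B, C be m2×m1 real matrices satisfying: (i) Bᵀ B = Cᵀ C; (ii) A Aᵀ = Aᵀ A = I_{m2} − 2 B Bᵀ; (iii) the symmetric block matrix S = [[0, A, B], [Aᵀ, 0, C], [Bᵀ, Cᵀ, 0]] of size 2·m2 + m1 satisfies S³ = S. Then, with r = rank B (so r ≤ min(m1, m2)), there exist orthogonal matrices P, Q ∈ O(m2) and R ∈ O(m1), a diagonal r×r matrix σ with strictly positive diagonal entries, and an r×r skew-symmetric real matrix Δ with Δᵀ Δ = I_r − 2 σ² and Δ σ = σ Δ, such that Pᵀ B R = Qᵀ C R is the block matrix with all entries zero except the bottom-right r×r block which equals σ (rows split as m2 = (m2 − r) + r, columns as m1 = (m1 − r) + r), and Pᵀ A Q is the block-diagonal matrix [[I_{m2−r}, 0], [0, Δ]]. -/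

import Mathlib

open Matrix

private lemma matFromColumns_add {R : Type*} [AddCommMonoid R] {m n₁ n₂ : Type*}
    (A₁ B₁ : Matrix m n₁ R) (A₂ B₂ : Matrix m n₂ R) :
    Matrix.fromCols A₁ A₂ + Matrix.fromCols B₁ B₂
      = Matrix.fromCols (A₁ + B₁) (A₂ + B₂) := by
  ext i (j | j) <;> simp [Matrix.fromCols]

private lemma matFromBlocks_sub {R : Type*} [AddCommGroup R] {m₁ m₂ n₁ n₂ : Type*}
    (A₁ B₁ : Matrix m₁ n₁ R) (A₂ B₂ : Matrix m₁ n₂ R)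
    (A₃ B₃ : Matrix m₂ n₁ R) (A₄ B₄ : Matrix m₂ n₂ R) :
    Matrix.fromBlocks A₁ A₂ A₃ A₄ - Matrix.fromBlocks B₁ B₂ B₃ B₄
      = Matrix.fromBlocks (A₁ - B₁) (A₂ - B₂) (A₃ - B₃) (A₄ - B₄) := by
  ext (i | i) (j | j) <;> simp [Matrix.fromBlocks]

/-- Extension of the normalized nonzero columns to an orthogonal matrix. -/
private lemma aux_extend {m2 k r : ℕ} (hr : r ≤ m2) (σ : Fin r → ℝ) (hσ : ∀ i, 0 < σ i)
    (N : Matrix (Fin m2) (Fin k ⊕ Fin r) ℝ)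
    (hN : Nᵀ * N = Matrix.fromBlocks 0 0 0 (Matrix.diagonal fun i => σ i * σ i)) :
    ∃ P : Matrix (Fin m2) (Fin (m2 - r) ⊕ Fin r) ℝ,
      Pᵀ * P = 1 ∧ Pᵀ * N = Matrix.fromBlocks 0 0 0 (Matrix.diagonal σ) := by
  classical
  have hNN : ∀ c d, (∑ i, N i c * N i d) =
      Matrix.fromBlocks (0 : Matrix (Fin k) (Fin k) ℝ) 0 0
        (Matrix.diagonal fun i => σ i * σ i) c d := by
    intro c d
    have h := Matrix.ext_iff.mpr hN c d
    simpa [Matrix.mul_apply, Matrix.transpose_apply] using h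
  have hcol0 : ∀ (j : Fin k) (i : Fin m2), N i (Sum.inl j) = 0 := by
    intro j i
    have h0 : (∑ i, N i (Sum.inl j) * N i (Sum.inl j)) = 0 := by
      simpa [Matrix.fromBlocks] using hNN (Sum.inl j) (Sum.inl j)
    have h := (Finset.sum_eq_zero_iff_of_nonneg
      (fun i _ => mul_self_nonneg (N i (Sum.inl j)))).mp h0 i (Finset.mem_univ i)
    exact mul_self_eq_zero.mp h
  set u : Fin r → EuclideanSpace ℝ (Fin m2) := fun j =>
    (WithLp.equiv 2 (Fin m2 → ℝ)).symm fun i => (σ j)⁻¹ * N i (Sum.inr j) with hu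
  have hu_apply : ∀ j i, u j i = (σ j)⁻¹ * N i (Sum.inr j) := fun j i => rfl
  have hinner : ∀ a b : Fin r, (inner ℝ (u a) (u b) : ℝ) = if a = b then 1 else 0 := by
    intro a b
    have hab := hNN (Sum.inr a) (Sum.inr b)
    simp only [PiLp.inner_apply, RCLike.inner_apply, conj_trivial]
    have hsum : (∑ i, u a i * u b i)
        = (σ a)⁻¹ * ((σ b)⁻¹ * ∑ i, N i (Sum.inr a) * N i (Sum.inr b)) := by
      rw [Finset.mul_sum, Finset.mul_sum]
      exact Finset.sum_congr rfl fun i _ => by rw [hu_apply, hu_apply]; ring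
    rw [show (∑ x, u b x * u a x) = ∑ i, u a i * u b i from
      Finset.sum_congr rfl fun i _ => mul_comm _ _]
    rw [hsum, hab]
    by_cases h : a = b
    · subst h
      have hne := (hσ a).ne'
      simp [Matrix.fromBlocks, Matrix.diagonal_apply_eq]
      field_simp
    · simp [Matrix.fromBlocks, Matrix.diagonal_apply_ne _ h, h]
  have hv : Orthonormal ℝ ((Set.range (Sum.inr : Fin r → Fin (m2 - r) ⊕ Fin r)).restrict
      (Sum.elim (fun _ => (0 : EuclideanSpace ℝ (Fin m2))) u)) := by
    rw [orthonormal_iff_ite]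
    rintro ⟨_, a, rfl⟩ ⟨_, b, rfl⟩
    rcases eq_or_ne a b with h | h
    · subst h
      rw [show ∀ c, (Set.range (Sum.inr : Fin r → Fin (m2 - r) ⊕ Fin r)).restrict
          (Sum.elim (fun _ => (0 : EuclideanSpace ℝ (Fin m2))) u) ⟨Sum.inr c, c, rfl⟩ = u c
          from fun c => rfl]
      simpa using hinner a a
    · have : (⟨Sum.inr a, a, rfl⟩ : Set.range (Sum.inr : Fin r → Fin (m2 - r) ⊕ Fin r))
          ≠ ⟨Sum.inr b, b, rfl⟩ := by
        simp [Subtype.ext_iff, h]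
      rw [show ∀ c, (Set.range (Sum.inr : Fin r → Fin (m2 - r) ⊕ Fin r)).restrict
          (Sum.elim (fun _ => (0 : EuclideanSpace ℝ (Fin m2))) u) ⟨Sum.inr c, c, rfl⟩ = u c
          from fun c => rfl, show ∀ c, (Set.range (Sum.inr : Fin r → Fin (m2 - r) ⊕ Fin r)).restrict
          (Sum.elim (fun _ => (0 : EuclideanSpace ℝ (Fin m2))) u) ⟨Sum.inr c, c, rfl⟩ = u c
          from fun c => rfl]
      simpa [this, h] using hinner a b
  have hcard : Module.finrank ℝ (EuclideanSpace ℝ (Fin m2))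
      = Fintype.card (Fin (m2 - r) ⊕ Fin r) := by
    simp [Nat.sub_add_cancel hr]
  obtain ⟨b, hb⟩ := hv.exists_orthonormalBasis_extension_of_card_eq hcard
  have hbu : ∀ j : Fin r, b (Sum.inr j) = u j := fun j => by
    simpa using hb (Sum.inr j) ⟨j, rfl⟩
  have hbib : ∀ c d, (∑ i, b c i * b d i) = if c = d then 1 else 0 := by
    intro c d
    have h := orthonormal_iff_ite.mp b.orthonormal c d
    rw [PiLp.inner_apply] at h
    simpa [mul_comm] using h
  refine ⟨Matrix.of fun i c => b c i, ?_, ?_⟩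
  · ext c d
    simp only [Matrix.mul_apply, Matrix.transpose_apply, Matrix.of_apply]
    rw [hbib c d, Matrix.one_apply]
  · ext c d
    rcases d with j | j
    · rcases c with i | i <;>
        simp [Matrix.mul_apply, Matrix.transpose_apply, hcol0 j]
    · have hNcol : ∀ i, N i (Sum.inr j) = σ j * u j i := by
        intro i
        rw [hu_apply, ← mul_assoc, mul_inv_cancel₀ (hσ j).ne', one_mul]
      simp only [Matrix.mul_apply, Matrix.transpose_apply, Matrix.of_apply]
      have hstep : (∑ i, b c i * N i (Sum.inr j)) = σ j * ∑ i, b c i * b (Sum.inr j) i := by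
        rw [Finset.mul_sum]
        refine Finset.sum_congr rfl fun i _ => ?_
        rw [hNcol i, hbu j]; ring
      rw [hstep, hbib c (Sum.inr j)]
      rcases c with i | i
      · simp [Matrix.fromBlocks]
      · rcases eq_or_ne i j with h | h
        · subst h; simp [Matrix.fromBlocks, Matrix.diagonal_apply_eq]
        · simp [Matrix.fromBlocks, Matrix.diagonal_apply_ne _ h, h]

/-- **Lemma 12.1 (normal form of the shape-operator blocks).**
Suppose the `m2×m2` matrix `A` and `m2×m1` matrices `B, C` satisfy
`Bᵀ B = Cᵀ C`, `A Aᵀ = Aᵀ A = I − 2 B Bᵀ`, and the symmetric block matrix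
`S = [[0, A, B],[Aᵀ, 0, C],[Bᵀ, Cᵀ, 0]]` satisfies `S³ = S`.  Then, with
`r = rank B ≤ min (m1, m2)`, there are orthogonal matrices `P, Q ∈ O(m2)`,
`R ∈ O(m1)`, a positive diagonal `r×r` matrix `σ` and an `r×r` skew-symmetric
matrix `Δ` with `Δᵀ Δ = I − 2 σ²` and `Δ σ = σ Δ`, such that
`Pᵀ B R = Qᵀ C R = [[0,0],[0,σ]]` and `Pᵀ A Q = [[I,0],[0,Δ]]` in block form
(rows split as `(m2 − r) + r`, columns as `(m1 − r) + r` resp. `(m2 − r) + r`). -/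
theorem stmt15 (m1 m2 : ℕ) (hm1 : 0 < m1) (hm2 : 0 < m2)
    (A : Matrix (Fin m2) (Fin m2) ℝ)
    (B C : Matrix (Fin m2) (Fin m1) ℝ)
    (h1 : Bᵀ * B = Cᵀ * C)
    (h2 : A * Aᵀ = 1 - (2 : ℝ) • (B * Bᵀ))
    (h2' : Aᵀ * A = 1 - (2 : ℝ) • (B * Bᵀ))
    (S : Matrix (Fin m2 ⊕ (Fin m2 ⊕ Fin m1)) (Fin m2 ⊕ (Fin m2 ⊕ Fin m1)) ℝ)
    (hS : S = Matrix.of fun i j =>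
      match i, j with
      | Sum.inl i, Sum.inl _ => (0 : ℝ)
      | Sum.inl i, Sum.inr (Sum.inl j) => A i j
      | Sum.inl i, Sum.inr (Sum.inr j) => B i j
      | Sum.inr (Sum.inl i), Sum.inl j => Aᵀ i j
      | Sum.inr (Sum.inl i), Sum.inr (Sum.inl j) => (0 : ℝ)
      | Sum.inr (Sum.inl i), Sum.inr (Sum.inr j) => C i j
      | Sum.inr (Sum.inr i), Sum.inl j => Bᵀ i j
      | Sum.inr (Sum.inr i), Sum.inr (Sum.inl j) => Cᵀ i j
      | Sum.inr (Sum.inr i), Sum.inr (Sum.inr j) => (0 : ℝ))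
    (hS3 : S ^ 3 = S) :
    ∃ (r : ℕ) (_ : r = B.rank) (hr2 : r ≤ m2) (hr1 : r ≤ m1)
      (P Q : Matrix (Fin m2) (Fin m2) ℝ) (R : Matrix (Fin m1) (Fin m1) ℝ)
      (σ : Fin r → ℝ) (Δ : Matrix (Fin r) (Fin r) ℝ),
      Pᵀ * P = 1 ∧ Qᵀ * Q = 1 ∧ Rᵀ * R = 1 ∧
      (∀ i, 0 < σ i) ∧
      Δᵀ = -Δ ∧
      Δᵀ * Δ = 1 - (2 : ℝ) • (Matrix.diagonal σ * Matrix.diagonal σ) ∧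
      Δ * Matrix.diagonal σ = Matrix.diagonal σ * Δ ∧
      Pᵀ * B * R =
        (Matrix.reindex (finSumFinEquiv.trans (finCongr (Nat.sub_add_cancel hr2)))
          (finSumFinEquiv.trans (finCongr (Nat.sub_add_cancel hr1)))
          (Matrix.fromBlocks (0 : Matrix (Fin (m2 - r)) (Fin (m1 - r)) ℝ) 0 0
            (Matrix.diagonal σ))) ∧
      Qᵀ * C * R =
        (Matrix.reindex (finSumFinEquiv.trans (finCongr (Nat.sub_add_cancel hr2)))
          (finSumFinEquiv.trans (finCongr (Nat.sub_add_cancel hr1)))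
          (Matrix.fromBlocks (0 : Matrix (Fin (m2 - r)) (Fin (m1 - r)) ℝ) 0 0
            (Matrix.diagonal σ))) ∧
      Pᵀ * A * Q =
        (Matrix.reindex (finSumFinEquiv.trans (finCongr (Nat.sub_add_cancel hr2)))
          (finSumFinEquiv.trans (finCongr (Nat.sub_add_cancel hr2)))
          (Matrix.fromBlocks (1 : Matrix (Fin (m2 - r)) (Fin (m2 - r)) ℝ) 0 0 Δ)) := by
  classical
  -- ## Step 1: extract the two needed identities from `S ^ 3 = S`.
  set E := Matrix.fromCols A B with hE
  set F1 := Matrix.fromBlocks (0 : Matrix (Fin m2) (Fin m2) ℝ) C Cᵀ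
    (0 : Matrix (Fin m1) (Fin m1) ℝ) with hF1
  have hSf : S = Matrix.fromBlocks 0 E Eᵀ F1 := by
    subst hS
    ext (i | i | i) (j | j | j) <;> rfl
  rw [pow_succ, pow_two, hSf] at hS3
  rw [Matrix.fromBlocks_multiply, Matrix.fromBlocks_multiply] at hS3
  simp only [Matrix.zero_mul, Matrix.mul_zero, zero_add, add_zero] at hS3
  have h11 := congrArg Matrix.toBlocks₁₁ hS3
  have h12 := congrArg Matrix.toBlocks₁₂ hS3
  rw [Matrix.toBlocks_fromBlocks₁₁, Matrix.toBlocks_fromBlocks₁₁] at h11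
  rw [Matrix.toBlocks_fromBlocks₁₂, Matrix.toBlocks_fromBlocks₁₂] at h12
  have hET : Eᵀ = Matrix.fromRows Aᵀ Bᵀ := by rw [hE, Matrix.transpose_fromCols]
  have hEFT : E * F1 = Matrix.fromCols (B * Cᵀ) (A * C) := by
    rw [hE, hF1, Matrix.fromCols_mul_fromBlocks]
    simp
  have hEET : E * Eᵀ = A * Aᵀ + B * Bᵀ := by
    rw [hE, hET, Matrix.fromCols_mul_fromRows]
  have idBC : B * (Cᵀ * Aᵀ) + A * (C * Bᵀ) = 0 := by
    have h := h11
    rw [hEFT, hET, Matrix.fromCols_mul_fromRows] at h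
    simpa [Matrix.mul_assoc] using h
  have idA : A * (C * Cᵀ) = B * (Bᵀ * A) := by
    have h := h12
    rw [hEET, hEFT, hE, Matrix.mul_fromCols, hF1, Matrix.fromCols_mul_fromBlocks] at h
    simp only [Matrix.mul_zero, Matrix.zero_mul, zero_add, add_zero] at h
    rw [matFromColumns_add] at h
    have h' := (Matrix.fromCols_ext_iff _ _ _ _).mp h
    have ha := h'.1
    rw [Matrix.add_mul, h2, Matrix.sub_mul, Matrix.one_mul, Matrix.smul_mul, two_smul] at ha
    have habel : A - (B * Bᵀ * A + B * Bᵀ * A) + B * Bᵀ * A + B * Bᵀ * A = A := by abel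
    have hc := add_left_cancel (ha.trans habel.symm)
    simpa [Matrix.mul_assoc] using hc
  -- ## Step 2: spectral decomposition of `Bᵀ * B`.
  have hG : (Bᵀ * B).IsHermitian := by
    have h := Matrix.isHermitian_conjTranspose_mul_self B
    rwa [Matrix.conjTranspose_eq_transpose_of_trivial] at h
  set μ := hG.eigenvalues with hμ
  have hμ0 : ∀ i, 0 ≤ μ i := by
    intro i
    have h := Matrix.posSemidef_conjTranspose_mul_self B
    rw [Matrix.conjTranspose_eq_transpose_of_trivial] at h
    exact h.eigenvalues_nonneg i
  set r := B.rank with hrdef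
  have hr2 : r ≤ m2 := B.rank_le_height
  have hr1 : r ≤ m1 := B.rank_le_width
  have hcardr : Fintype.card {i // μ i ≠ 0} = r := by
    rw [hrdef, ← Matrix.rank_transpose_mul_self B, hG.rank_eq_card_non_zero_eigs]
  have hcardz : Fintype.card {i // ¬ μ i ≠ 0} = m1 - r := by
    rw [Fintype.card_subtype_compl, hcardr, Fintype.card_fin]
  let eL : Fin (m1 - r) ≃ {i // ¬ μ i ≠ 0} := (Fintype.equivFinOfCardEq hcardz).symm
  let eR : Fin r ≃ {i // μ i ≠ 0} := (Fintype.equivFinOfCardEq hcardr).symm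
  let e1 : (Fin (m1 - r) ⊕ Fin r) ≃ Fin m1 :=
    (Equiv.sumCongr eL eR).trans ((Equiv.sumComm _ _).trans (Equiv.sumCompl fun i => μ i ≠ 0))
  have he1l : ∀ i, μ (e1 (Sum.inl i)) = 0 := fun i => not_not.mp (eL i).2
  have he1r : ∀ j, μ (e1 (Sum.inr j)) ≠ 0 := fun j => (eR j).2
  set σ : Fin r → ℝ := fun j => Real.sqrt (μ (e1 (Sum.inr j))) with hσdef
  have hσpos : ∀ j, 0 < σ j := fun j =>
    Real.sqrt_pos.mpr (lt_of_le_of_ne (hμ0 _) (Ne.symm (he1r j)))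
  have hσsq : ∀ j, σ j * σ j = μ (e1 (Sum.inr j)) := fun j =>
    Real.mul_self_sqrt (hμ0 _)
  set U := (hG.eigenvectorUnitary : Matrix (Fin m1) (Fin m1) ℝ) with hUdef
  have hUstar : star U = Uᵀ := Matrix.conjTranspose_eq_transpose_of_trivial U
  have hU1 : Uᵀ * U = 1 := by
    rw [← hUstar]
    exact (Matrix.mem_unitaryGroup_iff').mp hG.eigenvectorUnitary.2
  have hU2 : U * Uᵀ = 1 := by
    rw [← hUstar]
    exact (Matrix.mem_unitaryGroup_iff).mp hG.eigenvectorUnitary.2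
  have hspec : Uᵀ * (Bᵀ * B) * U = Matrix.diagonal μ := by
    have h := hG.conjStarAlgAut_star_eigenvectorUnitary
    rw [Unitary.conjStarAlgAut_star_apply] at h
    rw [hUstar] at h
    rw [h]
    congr 1
  set R₀ : Matrix (Fin m1) (Fin (m1 - r) ⊕ Fin r) ℝ := U.submatrix id e1 with hR₀def
  have hR1 : R₀ᵀ * R₀ = 1 := by
    rw [hR₀def, Matrix.transpose_submatrix]
    have h := Matrix.submatrix_mul_equiv Uᵀ U (⇑e1) (Equiv.refl (Fin m1)) (⇑e1)
    simp only [Equiv.coe_refl] at h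
    rw [h, hU1, Matrix.submatrix_one_equiv]
  have hR2 : R₀ * R₀ᵀ = 1 := by
    rw [hR₀def, Matrix.transpose_submatrix]
    have h := Matrix.submatrix_mul_equiv U Uᵀ id e1 id
    rw [h, hU2]
    ext i j
    simp [Matrix.one_apply]
  have hdiag : R₀ᵀ * ((Bᵀ * B) * R₀) =
      Matrix.fromBlocks 0 0 0 (Matrix.diagonal fun j => σ j * σ j) := by
    have hstep : (Bᵀ * B) * R₀ = ((Bᵀ * B) * U).submatrix id e1 := by
      rw [hR₀def]
      have h := Matrix.submatrix_mul_equiv (Bᵀ * B) U id (Equiv.refl (Fin m1)) (⇑e1)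
      simp only [Equiv.coe_refl] at h
      rw [← h]
      simp
    rw [hstep, hR₀def, Matrix.transpose_submatrix]
    have h := Matrix.submatrix_mul_equiv Uᵀ ((Bᵀ * B) * U) (⇑e1) (Equiv.refl (Fin m1)) (⇑e1)
    simp only [Equiv.coe_refl] at h
    rw [h, ← Matrix.mul_assoc, hspec, Matrix.submatrix_diagonal_equiv]
    have : (μ ∘ ⇑e1) = Sum.elim (fun _ : Fin (m1 - r) => (0:ℝ)) (fun j => σ j * σ j) := by
      funext c
      rcases c with i | j
      · simpa using he1l i
      · simpa using (hσsq j).symm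
    rw [this, ← Matrix.fromBlocks_diagonal, Matrix.diagonal_zero]
  -- ## Step 3: orthogonal `P₀` and `Q₀`.
  have hNB : (B * R₀)ᵀ * (B * R₀) =
      Matrix.fromBlocks 0 0 0 (Matrix.diagonal fun j => σ j * σ j) := by
    rw [Matrix.transpose_mul, ← hdiag]
    simp [Matrix.mul_assoc]
  have hNC : (C * R₀)ᵀ * (C * R₀) =
      Matrix.fromBlocks 0 0 0 (Matrix.diagonal fun j => σ j * σ j) := by
    rw [Matrix.transpose_mul, ← hdiag]
    calc R₀ᵀ * Cᵀ * (C * R₀) = R₀ᵀ * (Cᵀ * C * R₀) := by simp [Matrix.mul_assoc]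
      _ = R₀ᵀ * (Bᵀ * B * R₀) := by rw [← h1]
  obtain ⟨P₀, hP1, hPB⟩ := aux_extend hr2 σ hσpos (B * R₀) hNB
  obtain ⟨Q₀, hQ1, hQC⟩ := aux_extend hr2 σ hσpos (C * R₀) hNC
  set κ2 : (Fin (m2 - r) ⊕ Fin r) ≃ Fin m2 :=
    finSumFinEquiv.trans (finCongr (Nat.sub_add_cancel hr2)) with hκ2
  set κ1 : (Fin (m1 - r) ⊕ Fin r) ≃ Fin m1 :=
    finSumFinEquiv.trans (finCongr (Nat.sub_add_cancel hr1)) with hκ1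
  have hP2 : P₀ * P₀ᵀ = 1 := (Matrix.mul_eq_one_comm_of_equiv κ2.symm).mpr hP1
  have hQ2 : Q₀ * Q₀ᵀ = 1 := (Matrix.mul_eq_one_comm_of_equiv κ2.symm).mpr hQ1
  -- cancellation helpers
  have hPc : ∀ {p : Type} (X : Matrix (Fin m2) p ℝ), P₀ * (P₀ᵀ * X) = X := by
    intro p X; rw [← Matrix.mul_assoc, hP2, Matrix.one_mul]
  have hQc : ∀ {p : Type} (X : Matrix (Fin m2) p ℝ), Q₀ * (Q₀ᵀ * X) = X := by
    intro p X; rw [← Matrix.mul_assoc, hQ2, Matrix.one_mul]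
  have hRc : ∀ {p : Type} (X : Matrix (Fin m1) p ℝ), R₀ * (R₀ᵀ * X) = X := by
    intro p X; rw [← Matrix.mul_assoc, hR2, Matrix.one_mul]
  set F₀ : Matrix (Fin (m2 - r) ⊕ Fin r) (Fin (m1 - r) ⊕ Fin r) ℝ :=
    Matrix.fromBlocks 0 0 0 (Matrix.diagonal σ) with hF₀
  set D : Matrix (Fin r) (Fin r) ℝ := Matrix.diagonal fun j => σ j * σ j with hD
  set F₂ : Matrix (Fin (m2 - r) ⊕ Fin r) (Fin (m2 - r) ⊕ Fin r) ℝ :=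
    Matrix.fromBlocks 0 0 0 D with hF₂
  have hF₀F₀ : F₀ * F₀ᵀ = F₂ := by
    rw [hF₀, hF₂, hD, Matrix.fromBlocks_transpose, Matrix.fromBlocks_multiply]
    simp [Matrix.diagonal_mul_diagonal]
  have hBtr : R₀ᵀ * (Bᵀ * P₀) = F₀ᵀ := by
    have h := congrArg Matrix.transpose hPB
    rw [Matrix.transpose_mul, Matrix.transpose_mul, Matrix.transpose_transpose] at h
    rw [← h, Matrix.mul_assoc]
  have hCtr : R₀ᵀ * (Cᵀ * Q₀) = F₀ᵀ := by
    have h := congrArg Matrix.transpose hQC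
    rw [Matrix.transpose_mul, Matrix.transpose_mul, Matrix.transpose_transpose] at h
    rw [← h, Matrix.mul_assoc]
  have hXX : P₀ᵀ * (B * (Bᵀ * P₀)) = F₂ := by
    calc P₀ᵀ * (B * (Bᵀ * P₀)) = P₀ᵀ * (B * (R₀ * (R₀ᵀ * (Bᵀ * P₀)))) := by rw [hRc]
      _ = (P₀ᵀ * (B * R₀)) * (R₀ᵀ * (Bᵀ * P₀)) := by simp [Matrix.mul_assoc]
      _ = F₀ * F₀ᵀ := by rw [hPB, hBtr]
      _ = F₂ := hF₀F₀
  have hYY : Q₀ᵀ * (C * (Cᵀ * Q₀)) = F₂ := by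
    calc Q₀ᵀ * (C * (Cᵀ * Q₀)) = Q₀ᵀ * (C * (R₀ * (R₀ᵀ * (Cᵀ * Q₀)))) := by rw [hRc]
      _ = (Q₀ᵀ * (C * R₀)) * (R₀ᵀ * (Cᵀ * Q₀)) := by simp [Matrix.mul_assoc]
      _ = F₀ * F₀ᵀ := by rw [hQC, hCtr]
      _ = F₂ := hF₀F₀
  have hZZ : P₀ᵀ * (B * (Cᵀ * Q₀)) = F₂ := by
    calc P₀ᵀ * (B * (Cᵀ * Q₀)) = P₀ᵀ * (B * (R₀ * (R₀ᵀ * (Cᵀ * Q₀)))) := by rw [hRc]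
      _ = (P₀ᵀ * (B * R₀)) * (R₀ᵀ * (Cᵀ * Q₀)) := by simp [Matrix.mul_assoc]
      _ = F₀ * F₀ᵀ := by rw [hPB, hCtr]
      _ = F₂ := hF₀F₀
  have hWW : Q₀ᵀ * (C * (Bᵀ * P₀)) = F₂ := by
    calc Q₀ᵀ * (C * (Bᵀ * P₀)) = Q₀ᵀ * (C * (R₀ * (R₀ᵀ * (Bᵀ * P₀)))) := by rw [hRc]
      _ = (Q₀ᵀ * (C * R₀)) * (R₀ᵀ * (Bᵀ * P₀)) := by simp [Matrix.mul_assoc]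
      _ = F₀ * F₀ᵀ := by rw [hQC, hBtr]
      _ = F₂ := hF₀F₀
  -- ## Step 4: the transformed `A`.
  set At : Matrix (Fin (m2 - r) ⊕ Fin r) (Fin (m2 - r) ⊕ Fin r) ℝ := P₀ᵀ * (A * Q₀) with hAtdef
  have hAtT : Atᵀ = Q₀ᵀ * (Aᵀ * P₀) := by
    rw [hAtdef, Matrix.transpose_mul, Matrix.transpose_mul, Matrix.transpose_transpose,
      Matrix.mul_assoc]
  have hRel1 : At * Atᵀ = 1 - (2 : ℝ) • F₂ := by
    rw [hAtT, hAtdef]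
    calc P₀ᵀ * (A * Q₀) * (Q₀ᵀ * (Aᵀ * P₀))
        = P₀ᵀ * (A * (Q₀ * (Q₀ᵀ * (Aᵀ * P₀)))) := by simp [Matrix.mul_assoc]
      _ = P₀ᵀ * (A * Aᵀ * P₀) := by rw [hQc, Matrix.mul_assoc]
      _ = P₀ᵀ * ((1 - (2 : ℝ) • (B * Bᵀ)) * P₀) := by rw [h2]
      _ = P₀ᵀ * P₀ - (2 : ℝ) • (P₀ᵀ * (B * (Bᵀ * P₀))) := by
          rw [Matrix.sub_mul, Matrix.one_mul, Matrix.smul_mul, Matrix.mul_sub, Matrix.mul_smul]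
          rw [Matrix.mul_assoc]
      _ = 1 - (2 : ℝ) • F₂ := by rw [hP1, hXX]
  have hRel2 : At * F₂ = F₂ * At := by
    calc At * F₂ = P₀ᵀ * (A * Q₀) * (Q₀ᵀ * (C * (Cᵀ * Q₀))) := by rw [hYY, hAtdef]
      _ = P₀ᵀ * (A * (Q₀ * (Q₀ᵀ * (C * (Cᵀ * Q₀))))) := by simp [Matrix.mul_assoc]
      _ = P₀ᵀ * (A * (C * (Cᵀ * Q₀))) := by rw [hQc]
      _ = P₀ᵀ * ((A * (C * Cᵀ)) * Q₀) := by simp [Matrix.mul_assoc]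
      _ = P₀ᵀ * ((B * (Bᵀ * A)) * Q₀) := by rw [idA]
      _ = P₀ᵀ * (B * (Bᵀ * (A * Q₀))) := by simp [Matrix.mul_assoc]
      _ = P₀ᵀ * (B * (Bᵀ * (P₀ * (P₀ᵀ * (A * Q₀))))) := by rw [hPc]
      _ = (P₀ᵀ * (B * (Bᵀ * P₀))) * (P₀ᵀ * (A * Q₀)) := by simp [Matrix.mul_assoc]
      _ = F₂ * At := by rw [hXX, hAtdef]
  have hRel3 : F₂ * Atᵀ + At * F₂ = 0 := by
    have hterm1 : F₂ * Atᵀ = P₀ᵀ * (B * (Cᵀ * (Aᵀ * P₀))) := by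
      rw [hAtT, ← hZZ]
      calc P₀ᵀ * (B * (Cᵀ * Q₀)) * (Q₀ᵀ * (Aᵀ * P₀))
          = P₀ᵀ * (B * (Cᵀ * (Q₀ * (Q₀ᵀ * (Aᵀ * P₀))))) := by simp [Matrix.mul_assoc]
        _ = P₀ᵀ * (B * (Cᵀ * (Aᵀ * P₀))) := by rw [hQc]
    have hterm2 : At * F₂ = P₀ᵀ * (A * (C * (Bᵀ * P₀))) := by
      rw [hAtdef, ← hWW]
      calc P₀ᵀ * (A * Q₀) * (Q₀ᵀ * (C * (Bᵀ * P₀)))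
          = P₀ᵀ * (A * (Q₀ * (Q₀ᵀ * (C * (Bᵀ * P₀))))) := by simp [Matrix.mul_assoc]
        _ = P₀ᵀ * (A * (C * (Bᵀ * P₀))) := by rw [hQc]
    rw [hterm1, hterm2, ← Matrix.mul_add]
    have hsum : B * (Cᵀ * (Aᵀ * P₀)) + A * (C * (Bᵀ * P₀))
        = (B * (Cᵀ * Aᵀ) + A * (C * Bᵀ)) * P₀ := by
      rw [Matrix.add_mul]
      simp [Matrix.mul_assoc]
    rw [hsum, idBC, Matrix.zero_mul, Matrix.mul_zero]
  -- ## Step 5: block structure of `At`.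
  set W := At.toBlocks₁₁ with hWdef
  set X := At.toBlocks₁₂ with hXdef
  set Y := At.toBlocks₂₁ with hYdef
  set Z := At.toBlocks₂₂ with hZdef
  have hAtB : At = Matrix.fromBlocks W X Y Z := (Matrix.fromBlocks_toBlocks At).symm
  set Dinv : Matrix (Fin r) (Fin r) ℝ := Matrix.diagonal fun j => (σ j * σ j)⁻¹ with hDinv
  have hDD : D * Dinv = 1 := by
    rw [hD, hDinv, Matrix.diagonal_mul_diagonal,
      show (fun j => σ j * σ j * (σ j * σ j)⁻¹) = fun _ : Fin r => (1 : ℝ) from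
        funext fun j => mul_inv_cancel₀ (mul_pos (hσpos j) (hσpos j)).ne',
      Matrix.diagonal_one]
  have hDD' : Dinv * D = 1 := by
    rw [hD, hDinv, Matrix.diagonal_mul_diagonal,
      show (fun j => (σ j * σ j)⁻¹ * (σ j * σ j)) = fun _ : Fin r => (1 : ℝ) from
        funext fun j => inv_mul_cancel₀ (mul_pos (hσpos j) (hσpos j)).ne',
      Matrix.diagonal_one]
  have hblocks2 : Matrix.fromBlocks 0 (X * D) 0 (Z * D)
      = Matrix.fromBlocks 0 0 (D * Y) (D * Z) := by
    have h := hRel2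
    rw [hAtB, hF₂, Matrix.fromBlocks_multiply, Matrix.fromBlocks_multiply] at h
    simpa using h
  have hX0 : X = 0 := by
    have h := congrArg Matrix.toBlocks₁₂ hblocks2
    rw [Matrix.toBlocks_fromBlocks₁₂, Matrix.toBlocks_fromBlocks₁₂] at h
    calc X = X * (D * Dinv) := by rw [hDD, Matrix.mul_one]
      _ = (X * D) * Dinv := by rw [Matrix.mul_assoc]
      _ = 0 := by rw [h, Matrix.zero_mul]
  have hY0 : Y = 0 := by
    have h := congrArg Matrix.toBlocks₂₁ hblocks2
    rw [Matrix.toBlocks_fromBlocks₂₁, Matrix.toBlocks_fromBlocks₂₁] at h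
    calc Y = (Dinv * D) * Y := by rw [hDD', Matrix.one_mul]
      _ = Dinv * (D * Y) := by rw [Matrix.mul_assoc]
      _ = 0 := by rw [← h, Matrix.mul_zero]
  have hZD : Z * D = D * Z := by
    have h := congrArg Matrix.toBlocks₂₂ hblocks2
    rw [Matrix.toBlocks_fromBlocks₂₂, Matrix.toBlocks_fromBlocks₂₂] at h
    exact h
  have hskewD : D * Zᵀ + Z * D = 0 := by
    have h := hRel3
    rw [hAtB, Matrix.fromBlocks_transpose, hF₂, Matrix.fromBlocks_multiply,
      Matrix.fromBlocks_multiply, Matrix.fromBlocks_add, ← Matrix.fromBlocks_zero] at h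
    have h22 := congrArg Matrix.toBlocks₂₂ h
    rw [Matrix.toBlocks_fromBlocks₂₂, Matrix.toBlocks_fromBlocks₂₂] at h22
    simpa using h22
  have hskew : Zᵀ = -Z := by
    have h : D * Zᵀ + D * Z = 0 := by
      rw [hZD] at hskewD
      exact hskewD
    have h2'' : D * (Zᵀ + Z) = 0 := by rw [Matrix.mul_add]; exact h
    have h' : Zᵀ + Z = 0 := by
      calc Zᵀ + Z = (Dinv * D) * (Zᵀ + Z) := by rw [hDD', Matrix.one_mul]
        _ = Dinv * (D * (Zᵀ + Z)) := by rw [Matrix.mul_assoc]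
        _ = 0 := by rw [h2'', Matrix.mul_zero]
    exact eq_neg_of_add_eq_zero_left h'
  have hAtB' : At = Matrix.fromBlocks W 0 0 Z := by rw [hAtB, hX0, hY0]
  have hblocks1 : Matrix.fromBlocks (W * Wᵀ) 0 0 (Z * Zᵀ)
      = Matrix.fromBlocks 1 0 0 (1 - (2 : ℝ) • D) := by
    have h := hRel1
    rw [hAtB', Matrix.fromBlocks_transpose, Matrix.fromBlocks_multiply] at h
    have hrhs : (1 : Matrix (Fin (m2 - r) ⊕ Fin r) (Fin (m2 - r) ⊕ Fin r) ℝ)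
        - (2 : ℝ) • F₂ = Matrix.fromBlocks 1 0 0 (1 - (2 : ℝ) • D) := by
      rw [hF₂, ← Matrix.fromBlocks_one, Matrix.fromBlocks_smul, matFromBlocks_sub]
      simp
    rw [hrhs] at h
    simpa using h
  have hWW1 : W * Wᵀ = 1 := by
    have h := congrArg Matrix.toBlocks₁₁ hblocks1
    rwa [Matrix.toBlocks_fromBlocks₁₁, Matrix.toBlocks_fromBlocks₁₁] at h
  have hZZ1 : Z * Zᵀ = 1 - (2 : ℝ) • D := by
    have h := congrArg Matrix.toBlocks₂₂ hblocks1
    rwa [Matrix.toBlocks_fromBlocks₂₂, Matrix.toBlocks_fromBlocks₂₂] at h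
  have hZTZ : Zᵀ * Z = 1 - (2 : ℝ) • D := by
    rw [hskew, Matrix.neg_mul, ← Matrix.mul_neg, ← hskew, hZZ1]
  have hWW1' : Wᵀ * W = 1 := mul_eq_one_comm.mp hWW1
  have hZσ : Z * Matrix.diagonal σ = Matrix.diagonal σ * Z := by
    ext i j
    have h := Matrix.ext_iff.mpr hZD i j
    rw [hD, Matrix.mul_diagonal, Matrix.diagonal_mul] at h
    rw [Matrix.mul_diagonal, Matrix.diagonal_mul]
    rcases eq_or_ne (Z i j) 0 with h0 | h0
    · simp [h0]
    · have hsq : σ j * σ j = σ i * σ i :=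
        mul_left_cancel₀ h0 (h.trans (mul_comm _ _))
      have hσeq : σ j = σ i := by
        rcases mul_self_eq_mul_self_iff.mp hsq with h' | h'
        · exact h'
        · have hpi := hσpos i
          have hpj := hσpos j
          rw [h'] at hpj
          linarith
      rw [hσeq, mul_comm]
  -- ## Step 6: final assembly.
  set K : Matrix (Fin (m2 - r) ⊕ Fin r) (Fin (m2 - r) ⊕ Fin r) ℝ :=
    Matrix.fromBlocks W 0 0 1 with hK
  have hKT : Kᵀ = Matrix.fromBlocks Wᵀ 0 0 1 := by
    rw [hK, Matrix.fromBlocks_transpose]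
    simp
  set P₁ := P₀ * K with hP₁def
  have hP₁1 : P₁ᵀ * P₁ = 1 := by
    rw [hP₁def, Matrix.transpose_mul]
    calc Kᵀ * P₀ᵀ * (P₀ * K) = Kᵀ * ((P₀ᵀ * P₀) * K) := by simp [Matrix.mul_assoc]
      _ = Kᵀ * K := by rw [hP1, Matrix.one_mul]
      _ = 1 := by
          rw [hKT, hK, Matrix.fromBlocks_multiply]
          simp [hWW1', Matrix.fromBlocks_one]
  have hP₁B : P₁ᵀ * (B * R₀) = F₀ := by
    rw [hP₁def, Matrix.transpose_mul, Matrix.mul_assoc, hPB, hKT, hF₀,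
      Matrix.fromBlocks_multiply]
    simp
  have hP₁A : P₁ᵀ * (A * Q₀) = Matrix.fromBlocks 1 0 0 Z := by
    rw [hP₁def, Matrix.transpose_mul, Matrix.mul_assoc, ← hAtdef, hAtB', hKT,
      Matrix.fromBlocks_multiply]
    simp [hWW1']
  refine ⟨r, hrdef, hr2, hr1, P₁.submatrix id ⇑κ2.symm, Q₀.submatrix id ⇑κ2.symm,
    R₀.submatrix id ⇑κ1.symm, σ, Z, ?_, ?_, ?_, hσpos, hskew, ?_, hZσ, ?_, ?_, ?_⟩
  · rw [Matrix.transpose_submatrix]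
    have h := Matrix.submatrix_mul_equiv P₁ᵀ P₁ (⇑κ2.symm) (Equiv.refl (Fin m2)) (⇑κ2.symm)
    simp only [Equiv.coe_refl] at h
    rw [h, hP₁1, Matrix.submatrix_one_equiv]
  · rw [Matrix.transpose_submatrix]
    have h := Matrix.submatrix_mul_equiv Q₀ᵀ Q₀ (⇑κ2.symm) (Equiv.refl (Fin m2)) (⇑κ2.symm)
    simp only [Equiv.coe_refl] at h
    rw [h, hQ1, Matrix.submatrix_one_equiv]
  · rw [Matrix.transpose_submatrix]
    have h := Matrix.submatrix_mul_equiv R₀ᵀ R₀ (⇑κ1.symm) (Equiv.refl (Fin m1)) (⇑κ1.symm)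
    simp only [Equiv.coe_refl] at h
    rw [h, hR1, Matrix.submatrix_one_equiv]
  · rw [hZTZ, hD]
    rw [Matrix.diagonal_mul_diagonal]
  · rw [Matrix.transpose_submatrix, Matrix.reindex_apply, ← hκ2, ← hκ1]
    have ha := Matrix.submatrix_mul_equiv P₁ᵀ B (⇑κ2.symm) (Equiv.refl (Fin m2)) id
    simp only [Equiv.coe_refl] at ha
    rw [Matrix.submatrix_id_id] at ha
    rw [ha]
    have hb := Matrix.submatrix_mul_equiv (P₁ᵀ * B) R₀ (⇑κ2.symm) (Equiv.refl (Fin m1)) (⇑κ1.symm)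
    simp only [Equiv.coe_refl] at hb
    rw [hb, Matrix.mul_assoc, hP₁B, hF₀]
  · rw [Matrix.transpose_submatrix, Matrix.reindex_apply, ← hκ2, ← hκ1]
    have ha := Matrix.submatrix_mul_equiv Q₀ᵀ C (⇑κ2.symm) (Equiv.refl (Fin m2)) id
    simp only [Equiv.coe_refl] at ha
    rw [Matrix.submatrix_id_id] at ha
    rw [ha]
    have hb := Matrix.submatrix_mul_equiv (Q₀ᵀ * C) R₀ (⇑κ2.symm) (Equiv.refl (Fin m1)) (⇑κ1.symm)
    simp only [Equiv.coe_refl] at hb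
    rw [hb, Matrix.mul_assoc, hQC, hF₀]
  · rw [Matrix.transpose_submatrix, Matrix.reindex_apply, ← hκ2]
    have ha := Matrix.submatrix_mul_equiv P₁ᵀ A (⇑κ2.symm) (Equiv.refl (Fin m2)) id
    simp only [Equiv.coe_refl] at ha
    rw [Matrix.submatrix_id_id] at ha
    rw [ha]
    have hb := Matrix.submatrix_mul_equiv (P₁ᵀ * A) Q₀ (⇑κ2.symm) (Equiv.refl (Fin m2)) (⇑κ2.symm)
    simp only [Equiv.coe_refl] at hb
    rw [hb, Matrix.mul_assoc, hP₁A]
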